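/- With notation as above, the function λ ↦ g(λ) = σ² + (σ²/n)Tr[S̃(Σ̂+λI)⁻¹] + λ(λα²/p − σ²/n)Tr[S̃(Σ̂+λI)⁻²] (S̃ diagonal PSD, Σ̂ symmetric PSD) attains its global minimum over λ ∈ (0,∞) at λ* = σ²p/(α²n): g(λ*) ≤ g(λ) for all λ > 0. -/

import Mathlib

open Matrix

variable {q : ℕ}

lemma rgm_comm_inv {A B : Matrix (Fin q) (Fin q) ℝ} (hB : IsUnit B.det)
    (h : A * B = B * A) : A * B⁻¹ = B⁻¹ * A := by
  have h1 : B⁻¹ * (B * A) * B⁻¹ = A * B⁻¹ := by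
    rw [← Matrix.mul_assoc, Matrix.nonsing_inv_mul _ hB, one_mul]
  have h2 : B⁻¹ * (A * B) * B⁻¹ = B⁻¹ * A := by
    rw [Matrix.mul_assoc B⁻¹ (A * B) B⁻¹, Matrix.mul_assoc A B B⁻¹,
      Matrix.mul_nonsing_inv _ hB, mul_one]
  rw [← h1, ← h, h2]

lemma rgm_smul_one_posDef {x : ℝ} (hx : 0 < x) :
    (x • (1 : Matrix (Fin q) (Fin q) ℝ)).PosDef := by
  rw [Matrix.posDef_iff_dotProduct_mulVec]
  constructor
  · simp [Matrix.IsHermitian]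
  · intro v hv
    have : (x • (1 : Matrix (Fin q) (Fin q) ℝ)) *ᵥ v = x • v := by
      simp [Matrix.smul_mulVec]
    rw [this]
    simp only [dotProduct_smul, smul_eq_mul]
    exact mul_pos hx (Matrix.dotProduct_star_self_pos_iff.mpr hv)

lemma rgm_smul_psd {x : ℝ} (hx : 0 ≤ x) {S : Matrix (Fin q) (Fin q) ℝ}
    (hS : S.PosSemidef) : (x • S).PosSemidef := by
  rw [Matrix.posSemidef_iff_dotProduct_mulVec]
  constructor
  · simpa [Matrix.IsHermitian] using congrArg (x • ·) hS.1.eq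
  · intro v
    simp only [Matrix.smul_mulVec, dotProduct_smul, smul_eq_mul]
    exact mul_nonneg hx (hS.dotProduct_mulVec_nonneg v)

lemma rgm_diag_nonneg {N : Matrix (Fin q) (Fin q) ℝ} (hN : N.PosSemidef) (i : Fin q) :
    0 ≤ N i i := by
  have := hN.dotProduct_mulVec_nonneg (Pi.single i 1)
  simpa [Matrix.mulVec_single, dotProduct_single] using this

lemma rgm_sqrt {S : Matrix (Fin q) (Fin q) ℝ} (hS : S.PosSemidef) :
    ∃ R : Matrix (Fin q) (Fin q) ℝ, R.IsHermitian ∧ R * R = S := by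
  open scoped MatrixOrder in
  exact ⟨CFC.sqrt S, (CFC.sqrt_nonneg S).posSemidef.isHermitian,
    CFC.sqrt_mul_sqrt_self S hS.nonneg⟩

/-- The function
`g(λ) = σ² + (σ²/n)Tr[S̃(Σ̂+λI)⁻¹] + λ(λα²/p − σ²/n)Tr[S̃(Σ̂+λI)⁻²]`
(`S̃` diagonal PSD, `Σ̂` symmetric PSD) attains its global minimum over `(0,∞)`
at `λ* = σ²p/(α²n)`. -/
theorem risk_global_min (p n : ℕ) (hp : 0 < p) (hn : 0 < n) (α σ : ℝ)
    (hα : 0 < α) (hσ : 0 < σ)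
    (S : Matrix (Fin p) (Fin p) ℝ) (hS : S.PosSemidef)
    (d : Fin p → ℝ) (hd : ∀ i, 0 ≤ d i) :
    let Stil : Matrix (Fin p) (Fin p) ℝ := Matrix.diagonal d
    let Q : ℝ → Matrix (Fin p) (Fin p) ℝ :=
      fun lam => (S + lam • (1 : Matrix (Fin p) (Fin p) ℝ))⁻¹
    let g : ℝ → ℝ := fun lam =>
      σ ^ 2 + (σ ^ 2 / (n : ℝ)) * Matrix.trace (Stil * Q lam)
        + lam * (lam * α ^ 2 / (p : ℝ) - σ ^ 2 / (n : ℝ)) *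
            Matrix.trace (Stil * (Q lam * Q lam))
    ∀ lam : ℝ, 0 < lam → g (σ ^ 2 * (p : ℝ) / (α ^ 2 * (n : ℝ))) ≤ g lam := by
  intro Stil Q g lam hlam
  have hpR : (0:ℝ) < p := Nat.cast_pos.mpr hp
  have hnR : (0:ℝ) < n := Nat.cast_pos.mpr hn
  simp only [g, Q, Stil]
  set a : ℝ := α ^ 2 / p with ha_def
  set c : ℝ := σ ^ 2 / n with hc_def
  have ha : 0 < a := div_pos (pow_pos hα 2) hpR
  have hc : 0 < c := div_pos (pow_pos hσ 2) hnR
  have hls : σ ^ 2 * (p : ℝ) / (α ^ 2 * n) = c / a := by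
    rw [ha_def, hc_def]
    field_simp
  rw [hls]
  have hmul : ∀ x : ℝ, x * α ^ 2 / p = x * a := fun x => by rw [ha_def, mul_div_assoc]
  rw [hmul lam, hmul (c / a)]
  -- matrices
  set A := S + lam • (1 : Matrix (Fin p) (Fin p) ℝ) with hA_def
  set B := S + (c / a) • (1 : Matrix (Fin p) (Fin p) ℝ) with hB_def
  set C := a • S + c • (1 : Matrix (Fin p) (Fin p) ℝ) with hC_def
  have hApd : A.PosDef := Matrix.PosDef.posSemidef_add hS (rgm_smul_one_posDef hlam)
  have hBpd : B.PosDef :=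
    Matrix.PosDef.posSemidef_add hS (rgm_smul_one_posDef (div_pos hc ha))
  have hCpd : C.PosDef :=
    Matrix.PosDef.posSemidef_add (rgm_smul_psd ha.le hS) (rgm_smul_one_posDef hc)
  have hAd : IsUnit A.det := (Matrix.isUnit_iff_isUnit_det A).mp hApd.isUnit
  have hBd : IsUnit B.det := (Matrix.isUnit_iff_isUnit_det B).mp hBpd.isUnit
  have hCd : IsUnit C.det := (Matrix.isUnit_iff_isUnit_det C).mp hCpd.isUnit
  obtain ⟨R, hRh, hRR⟩ := rgm_sqrt hS
  -- commutation facts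
  have hSA : S * A = A * S := by
    simp only [hA_def, Matrix.mul_add, Matrix.add_mul, Matrix.mul_smul, Matrix.smul_mul,
      mul_one, one_mul]
  have hSC : S * C = C * S := by
    simp only [hC_def, Matrix.mul_add, Matrix.add_mul, Matrix.mul_smul, Matrix.smul_mul,
      mul_one, one_mul]
  have hCA : C * A = A * C := by
    simp only [hA_def, hC_def, Matrix.mul_add, Matrix.add_mul, Matrix.mul_smul,
      Matrix.smul_mul, mul_one, one_mul, smul_add, smul_smul]
    module
  have hRS : R * S = S * R := by rw [← hRR, Matrix.mul_assoc]
  have hRA : R * A = A * R := by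
    simp only [hA_def, Matrix.mul_add, Matrix.add_mul, Matrix.mul_smul, Matrix.smul_mul,
      mul_one, one_mul, hRS]
  have hRC : R * C = C * R := by
    simp only [hC_def, Matrix.mul_add, Matrix.add_mul, Matrix.mul_smul, Matrix.smul_mul,
      mul_one, one_mul, hRS]
  -- inverse commutation and sorting lemmas (canonical order: A⁻¹ < C⁻¹ < R < S)
  have hSAi : S * A⁻¹ = A⁻¹ * S := rgm_comm_inv hAd hSA
  have hSCi : S * C⁻¹ = C⁻¹ * S := rgm_comm_inv hCd hSC
  have hRAi : R * A⁻¹ = A⁻¹ * R := rgm_comm_inv hAd hRA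
  have hRCi : R * C⁻¹ = C⁻¹ * R := rgm_comm_inv hCd hRC
  have hCAi : C * A⁻¹ = A⁻¹ * C := rgm_comm_inv hAd hCA
  have hCiAi : C⁻¹ * A⁻¹ = A⁻¹ * C⁻¹ := (rgm_comm_inv hCd hCAi.symm).symm
  have swapRA : ∀ X, R * (A⁻¹ * X) = A⁻¹ * (R * X) := fun X => by
    rw [← Matrix.mul_assoc, hRAi, Matrix.mul_assoc]
  have swapRC : ∀ X, R * (C⁻¹ * X) = C⁻¹ * (R * X) := fun X => by
    rw [← Matrix.mul_assoc, hRCi, Matrix.mul_assoc]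
  have swapCA : ∀ X, C⁻¹ * (A⁻¹ * X) = A⁻¹ * (C⁻¹ * X) := fun X => by
    rw [← Matrix.mul_assoc, hCiAi, Matrix.mul_assoc]
  have swapSA : ∀ X, S * (A⁻¹ * X) = A⁻¹ * (S * X) := fun X => by
    rw [← Matrix.mul_assoc, hSAi, Matrix.mul_assoc]
  have swapSC : ∀ X, S * (C⁻¹ * X) = C⁻¹ * (S * X) := fun X => by
    rw [← Matrix.mul_assoc, hSCi, Matrix.mul_assoc]
  have cancelA : ∀ X, A * (A⁻¹ * X) = X := fun X => by
    rw [← Matrix.mul_assoc, Matrix.mul_nonsing_inv _ hAd, one_mul]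
  have cancelC : ∀ X, C * (C⁻¹ * X) = X := fun X => by
    rw [← Matrix.mul_assoc, Matrix.mul_nonsing_inv _ hCd, one_mul]
  -- the key polynomial identity
  have hE : (c • S + (a * lam ^ 2) • (1 : Matrix (Fin p) (Fin p) ℝ)) * C
      = ((a * lam - c) ^ 2) • S + (a * c) • (A * A) := by
    simp only [hA_def, hC_def, Matrix.mul_add, Matrix.add_mul, Matrix.mul_smul,
      Matrix.smul_mul, mul_one, one_mul, smul_add, smul_smul]
    module
  set N := S * (C⁻¹ * (A⁻¹ * A⁻¹)) with hN_def
  -- divided key identity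
  have key : (c • S + (a * lam ^ 2) • (1 : Matrix (Fin p) (Fin p) ℝ)) * (A⁻¹ * A⁻¹)
      = ((a * lam - c) ^ 2) • N + (a * c) • C⁻¹ := by
    conv_lhs => rw [show A⁻¹ * A⁻¹ = C * (C⁻¹ * (A⁻¹ * A⁻¹)) from (cancelC _).symm,
      ← Matrix.mul_assoc, hE]
    simp only [hN_def, Matrix.add_mul, Matrix.smul_mul, Matrix.mul_assoc,
      swapCA, swapSA, swapSC, hCiAi, hSAi, hSCi, cancelA]
  -- PSD form of N
  have hNform : N = (A⁻¹ * R) * C⁻¹ * (A⁻¹ * R)ᴴ := by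
    have ht : (A⁻¹ * R)ᴴ = R * A⁻¹ := by
      rw [Matrix.conjTranspose_mul, hRh.eq,
        hApd.inv.isHermitian.eq]
    rw [ht, hN_def, ← hRR]
    simp only [Matrix.mul_assoc, swapRA, swapRC, swapCA, hRAi, hRCi, hCiAi]
  have hNpsd : N.PosSemidef := by
    rw [hNform]
    exact hCpd.inv.posSemidef.mul_mul_conjTranspose_same _
  -- the minimizer side
  have haB : a • B = C := by
    rw [hB_def, hC_def, smul_add, smul_smul, mul_div_cancel₀ c ha.ne']
  have hBinv : B⁻¹ = a • C⁻¹ := by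
    apply Matrix.inv_eq_right_inv
    rw [Matrix.mul_smul, ← Matrix.smul_mul, haB, Matrix.mul_nonsing_inv _ hCd]
  have hcoef : c • S + (a * (c / a) ^ 2) • (1 : Matrix (Fin p) (Fin p) ℝ)
      = (c / a) • C := by
    have e1 : c / a * a = c := div_mul_cancel₀ c ha.ne'
    have e2 : a * (c / a) ^ 2 = c / a * c := by field_simp
    rw [hC_def, smul_add, smul_smul, smul_smul, e1, e2]
  have hFstar : (c • S + (a * (c / a) ^ 2) • (1 : Matrix (Fin p) (Fin p) ℝ)) * (B⁻¹ * B⁻¹)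
      = (a * c) • C⁻¹ := by
    rw [hcoef, hBinv]
    simp only [Matrix.smul_mul, Matrix.mul_smul, smul_smul, cancelC]
    congr 1
    field_simp
  -- trace reduction
  have tr_eq : ∀ (lam' : ℝ) (M : Matrix (Fin p) (Fin p) ℝ), IsUnit M.det →
      M = S + lam' • (1 : Matrix (Fin p) (Fin p) ℝ) →
      σ ^ 2 + c * Matrix.trace (Matrix.diagonal d * M⁻¹)
        + lam' * (lam' * a - c) * Matrix.trace (Matrix.diagonal d * (M⁻¹ * M⁻¹))
      = σ ^ 2 + Matrix.trace (Matrix.diagonal d *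
          ((c • S + (a * lam' ^ 2) • (1 : Matrix (Fin p) (Fin p) ℝ)) * (M⁻¹ * M⁻¹))) := by
    intro lam' M hMd hM
    have hid : (c • S + (a * lam' ^ 2) • (1 : Matrix (Fin p) (Fin p) ℝ)) * (M⁻¹ * M⁻¹)
        = c • M⁻¹ + (lam' * (lam' * a - c)) • (M⁻¹ * M⁻¹) := by
      have h0 : c • S + (a * lam' ^ 2) • (1 : Matrix (Fin p) (Fin p) ℝ)
          = c • M + (lam' * (lam' * a - c)) • (1 : Matrix (Fin p) (Fin p) ℝ) := by
        rw [hM, smul_add, smul_smul]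
        module
      rw [h0, Matrix.add_mul, Matrix.smul_mul, Matrix.smul_mul, one_mul,
        ← Matrix.mul_assoc, Matrix.mul_nonsing_inv _ hMd, one_mul]
    rw [hid, Matrix.mul_add, Matrix.mul_smul, Matrix.mul_smul, Matrix.trace_add,
      Matrix.trace_smul, Matrix.trace_smul, smul_eq_mul, smul_eq_mul]
    ring
  rw [tr_eq lam A hAd hA_def, tr_eq (c / a) B hBd hB_def, hFstar, key]
  have htrN : 0 ≤ Matrix.trace (Matrix.diagonal d * N) := by
    rw [Matrix.trace]
    refine Finset.sum_nonneg fun i _ => ?_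
    simp only [Matrix.diag_apply, Matrix.diagonal_mul]
    exact mul_nonneg (hd i) (rgm_diag_nonneg hNpsd i)
  have hexp : Matrix.trace (Matrix.diagonal d * (((a * lam - c) ^ 2) • N + (a * c) • C⁻¹))
      = (a * lam - c) ^ 2 * Matrix.trace (Matrix.diagonal d * N)
        + (a * c) * Matrix.trace (Matrix.diagonal d * C⁻¹) := by
    rw [Matrix.mul_add, Matrix.mul_smul, Matrix.mul_smul, Matrix.trace_add,
      Matrix.trace_smul, Matrix.trace_smul, smul_eq_mul, smul_eq_mul]
  rw [hexp, Matrix.mul_smul, Matrix.trace_smul, smul_eq_mul]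
  nlinarith [mul_nonneg (sq_nonneg (a * lam - c)) htrN]
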